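/- Let F be a field, g a Lie algebra over F, and M a left g-module. Then the left hemi-semidirect product g ⋉_ℓ M is a simple left Leibniz algebra if, and only if, g is a simple Lie algebra and either M = 0 or M is a non-trivial irreducible g-module. (No hypothesis on the dimensions of g and M or on the characteristic of F is needed.) -/

import Mathlib

universe u v w

section LeibnizDefs

variable (F : Type v) [Field F] {L : Type u} [AddCommGroup L] [Module F L]

/-- The Leibniz kernel `Leib(L) = span_F {x² : x ∈ L}` of a (Leibniz) multiplication. -/
def leibKer (mul : L → L → L) : Submodule F L :=
  Submodule.span F {z : L | ∃ x : L, z = mul x x}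

/-- The derived subalgebra `L² = span_F {xy : x, y ∈ L}`. -/
def derivedSub (mul : L → L → L) : Submodule F L :=
  Submodule.span F {z : L | ∃ x y : L, z = mul x y}

/-- A (two-sided) ideal of an algebra with multiplication `mul`. -/
def IsIdealOf (mul : L → L → L) (I : Submodule F L) : Prop :=
  ∀ x : L, ∀ a ∈ I, mul x a ∈ I ∧ mul a x ∈ I

/-- The derived series of a subspace: `I⁽⁰⁾ = I`, `I⁽ⁿ⁺¹⁾ = span {ab : a, b ∈ I⁽ⁿ⁾}`. -/
def derSeries (mul : L → L → L) (I : Submodule F L) : ℕ → Submodule F L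
  | 0 => I
  | n + 1 => Submodule.span F
      {z : L | ∃ a ∈ derSeries mul I n, ∃ b ∈ derSeries mul I n, z = mul a b}

/-- A subspace is solvable if its derived series vanishes eventually. -/
def IsSolvableSub (mul : L → L → L) (I : Submodule F L) : Prop :=
  ∃ n : ℕ, derSeries F mul I n = ⊥

/-- A left Leibniz algebra is semi-simple if every solvable ideal is contained
in its Leibniz kernel. -/
def IsSemisimpleLeibniz (mul : L → L → L) : Prop :=
  ∀ I : Submodule F L, IsIdealOf F mul I → IsSolvableSub F mul I → I ≤ leibKer F mul

/-- A left Leibniz algebra is Lie-simple if the only ideals containing `Leib(L)`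
are `Leib(L)` and `L`, and `Leib(L) ⊊ L²`. -/
def IsLieSimpleLeibniz (mul : L → L → L) : Prop :=
  (∀ I : Submodule F L, IsIdealOf F mul I → leibKer F mul ≤ I →
      I = leibKer F mul ∨ I = ⊤) ∧ leibKer F mul < derivedSub F mul

/-- A left Leibniz algebra is simple if its only ideals are `0`, `Leib(L)` and `L`,
and `Leib(L) ⊊ L²`. -/
def IsSimpleLeibniz (mul : L → L → L) : Prop :=
  (∀ I : Submodule F L, IsIdealOf F mul I →
      I = ⊥ ∨ I = leibKer F mul ∨ I = ⊤) ∧ leibKer F mul < derivedSub F mul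

/-- A non-abelian algebra whose only ideals are `0` and the whole algebra. -/
def IsSimpleMul (mul : L → L → L) : Prop :=
  (∃ x y : L, mul x y ≠ 0) ∧
  ∀ I : Submodule F L, IsIdealOf F mul I → I = ⊥ ∨ I = ⊤

/-- The multiplication is bilinear over `F`. -/
def IsBilinearMul (mul : L → L → L) : Prop :=
  (∀ x y z : L, mul (x + y) z = mul x z + mul y z) ∧
  (∀ x y z : L, mul x (y + z) = mul x y + mul x z) ∧
  (∀ (c : F) (x y : L), mul (c • x) y = c • mul x y) ∧
  (∀ (c : F) (x y : L), mul x (c • y) = c • mul x y)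

/-- The left Leibniz identity `x(yz) = (xy)z + y(xz)`. -/
def IsLeftLeibnizMul (mul : L → L → L) : Prop :=
  ∀ x y z : L, mul x (mul y z) = mul (mul x y) z + mul y (mul x z)

end LeibnizDefs

section LieDefs

variable (F : Type v) [Field F] (g : Type u) [LieRing g] [LieAlgebra F g]

/-- A Lie algebra is semi-simple if its only solvable ideal is `0`. -/
def IsSemisimpleLieDef : Prop :=
  ∀ I : Submodule F g, IsIdealOf F (fun x y : g => ⁅x, y⁆) I →
    IsSolvableSub F (fun x y : g => ⁅x, y⁆) I → I = ⊥

/-- A Lie algebra is simple if it is non-abelian and its only ideals are `0` and `g`. -/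
def IsSimpleLieDef : Prop :=
  IsSimpleMul F (fun x y : g => ⁅x, y⁆)

end LieDefs

section ModuleDefs

variable (F : Type v) [Field F] (g : Type u) [LieRing g] [LieAlgebra F g]
  (M : Type w) [AddCommGroup M] [Module F M] [LieRingModule g M] [LieModule F g M]

/-- `gM := span_F {x·m : x ∈ g, m ∈ M}`. -/
def gModSpan : Submodule F M :=
  Submodule.span F {m : M | ∃ (x : g) (n : M), m = ⁅x, n⁆}

/-- A subspace of `M` that is stable under the `g`-action. -/
def IsLieSubmoduleOf (N : Submodule F M) : Prop :=
  ∀ x : g, ∀ n ∈ N, ⁅x, n⁆ ∈ N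

/-- `M` is an irreducible `g`-module: `M ≠ 0` and its only `g`-submodules are `0` and `M`. -/
def IsIrreducibleLieModule : Prop :=
  (∃ m : M, m ≠ 0) ∧
  ∀ N : Submodule F M, IsLieSubmoduleOf F g M N → N = ⊥ ∨ N = ⊤

/-- `M` is completely reducible: every `g`-submodule has a `g`-invariant complement. -/
def IsCompletelyReducibleLieModule : Prop :=
  ∀ N : Submodule F M, IsLieSubmoduleOf F g M N →
    ∃ N' : Submodule F M, IsLieSubmoduleOf F g M N' ∧ N ⊓ N' = ⊥ ∧ N ⊔ N' = ⊤

/-- `M` contains no non-zero trivial `g`-submodule. -/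
def HasNoTrivialLieSubmodule : Prop :=
  ∀ N : Submodule F M, IsLieSubmoduleOf F g M N →
    (∀ x : g, ∀ n ∈ N, ⁅x, n⁆ = (0 : M)) → N = ⊥

end ModuleDefs

/-- The multiplication `(x, m)(y, n) := ([x, y], x·n)` of the left hemi-semidirect
product `g ⋉_ℓ M`. -/
def hemiMul {g : Type u} {M : Type w} [LieRing g] [AddCommGroup M]
    [LieRingModule g M] (a b : g × M) : g × M :=
  (⁅a.1, b.1⁆, ⁅a.1, b.2⁆)

section AuxLemmas

open Submodule

variable {F : Type v} [Field F] {g : Type u} [LieRing g] [LieAlgebra F g]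
  {M : Type w} [AddCommGroup M] [Module F M] [LieRingModule g M] [LieModule F g M]

lemma lie_mem_gModSpan (x : g) (m : M) : ⁅x, m⁆ ∈ gModSpan F g M :=
  Submodule.subset_span ⟨x, m, rfl⟩

lemma inr_gModSpan_mem_leibKer {n : M} (hn : n ∈ gModSpan F g M) :
    (((0 : g), n) : g × M) ∈ leibKer F (hemiMul (g := g) (M := M)) := by
  induction hn using Submodule.span_induction with
  | mem m hm =>
    obtain ⟨x, n', rfl⟩ := hm
    exact Submodule.subset_span ⟨(x, n'), by simp [hemiMul]⟩
  | zero => exact (leibKer F (hemiMul (g := g) (M := M))).zero_mem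
  | add a b _ _ ha hb =>
    simpa using (leibKer F (hemiMul (g := g) (M := M))).add_mem ha hb
  | smul c a _ ha =>
    simpa using (leibKer F (hemiMul (g := g) (M := M))).smul_mem c ha

lemma leibKer_le_prod :
    leibKer F (hemiMul (g := g) (M := M)) ≤
      (⊥ : Submodule F g).prod (gModSpan F g M) := by
  refine Submodule.span_le.2 ?_
  rintro z ⟨a, rfl⟩
  exact Submodule.mem_prod.2 ⟨by simp [hemiMul], lie_mem_gModSpan _ _⟩

lemma leibKer_eq_prod :
    leibKer F (hemiMul (g := g) (M := M)) =
      (⊥ : Submodule F g).prod (gModSpan F g M) := by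
  refine le_antisymm leibKer_le_prod ?_
  intro z hz
  obtain ⟨h1, h2⟩ := Submodule.mem_prod.1 hz
  have hz1 : z = ((0 : g), z.2) := Prod.ext (by simpa using h1) rfl
  rw [hz1]
  exact inr_gModSpan_mem_leibKer h2

lemma prod_isIdeal (J : Submodule F g) (hJ : IsIdealOf F (fun x y : g => ⁅x, y⁆) J) :
    IsIdealOf F (hemiMul (g := g) (M := M)) (J.prod (gModSpan F g M)) := by
  intro z a ha
  obtain ⟨h1, _⟩ := Submodule.mem_prod.1 ha
  exact ⟨Submodule.mem_prod.2 ⟨(hJ z.1 a.1 h1).1, lie_mem_gModSpan _ _⟩,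
    Submodule.mem_prod.2 ⟨(hJ z.1 a.1 h1).2, lie_mem_gModSpan _ _⟩⟩

lemma inr_isIdeal (N : Submodule F M) (hN : IsLieSubmoduleOf F g M N) :
    IsIdealOf F (hemiMul (g := g) (M := M)) ((⊥ : Submodule F g).prod N) := by
  intro z a ha
  obtain ⟨h1, h2⟩ := Submodule.mem_prod.1 ha
  have ha1 : a.1 = 0 := by simpa using h1
  constructor
  · exact Submodule.mem_prod.2 ⟨by simp [hemiMul, ha1], hN z.1 a.2 h2⟩
  · exact Submodule.mem_prod.2 ⟨by simp [hemiMul, ha1], by simp [hemiMul, ha1]⟩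

lemma mapFst_isIdeal (I : Submodule F (g × M))
    (hI : IsIdealOf F (hemiMul (g := g) (M := M)) I) :
    IsIdealOf F (fun x y : g => ⁅x, y⁆) (I.map (LinearMap.fst F g M)) := by
  rintro x a ⟨p, hp, rfl⟩
  exact ⟨⟨hemiMul (x, 0) p, (hI (x, 0) p hp).1, rfl⟩,
    ⟨hemiMul p (x, 0), (hI (x, 0) p hp).2, rfl⟩⟩

end AuxLemmas

/-- `g ⋉_ℓ M` is a simple left Leibniz algebra if, and only if,
`g` is a simple Lie algebra and either `M = 0` or `M` is a non-trivial irreducible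
`g`-module. -/
theorem hemiSemidirectProduct_simple_iff (F : Type v) [Field F]
    (g : Type u) [LieRing g] [LieAlgebra F g]
    (M : Type w) [AddCommGroup M] [Module F M] [LieRingModule g M] [LieModule F g M] :
    IsSimpleLeibniz F (hemiMul (g := g) (M := M)) ↔
      IsSimpleLieDef F g ∧
        ((∀ m : M, m = 0) ∨
          ((∃ (x : g) (m : M), ⁅x, m⁆ ≠ 0) ∧ IsIrreducibleLieModule F g M)) := by
  constructor
  · rintro ⟨hIdeals, hlt⟩
    -- g is non-abelian
    have hna : ∃ x y : g, ⁅x, y⁆ ≠ 0 := by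
      by_contra h
      push_neg at h
      have hle : derivedSub F (hemiMul (g := g) (M := M)) ≤
          leibKer F (hemiMul (g := g) (M := M)) := by
        refine Submodule.span_le.2 ?_
        rintro z ⟨a, b, rfl⟩
        have he : hemiMul a b = hemiMul (a.1, b.2) (a.1, b.2) := by
          simp [hemiMul, h]
        rw [he]
        exact Submodule.subset_span ⟨_, rfl⟩
      exact absurd (lt_of_lt_of_le hlt hle) (lt_irrefl _)
    obtain ⟨x₀, y₀, hxy⟩ := hna
    have hx₀ : x₀ ≠ 0 := fun h => hxy (by simp [h])
    -- the ideal ⊤ × gM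
    have htopIdeal : IsIdealOf F (hemiMul (g := g) (M := M))
        ((⊤ : Submodule F g).prod (gModSpan F g M)) :=
      prod_isIdeal ⊤ (fun _ _ _ => ⟨trivial, trivial⟩)
    have hx0mem : ((x₀, (0 : M)) : g × M) ∈ (⊤ : Submodule F g).prod (gModSpan F g M) :=
      Submodule.mem_prod.2 ⟨trivial, Submodule.zero_mem _⟩
    have hgM : (∀ m : M, m = 0) ∨ gModSpan F g M = ⊤ := by
      rcases hIdeals _ htopIdeal with h | h | h
      · exfalso
        rw [h] at hx0mem
        exact hx₀ (by simpa using congrArg Prod.fst ((Submodule.mem_bot F).1 hx0mem))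
      · exfalso
        rw [h] at hx0mem
        have := (Submodule.mem_prod.1 (leibKer_le_prod hx0mem)).1
        exact hx₀ (by simpa using this)
      · right
        refine Submodule.eq_top_iff'.2 fun m => ?_
        have hm : (((0 : g), m) : g × M) ∈ (⊤ : Submodule F g).prod (gModSpan F g M) := by
          rw [h]; trivial
        exact (Submodule.mem_prod.1 hm).2
    refine ⟨⟨⟨x₀, y₀, hxy⟩, ?_⟩, ?_⟩
    · -- ideals of g
      intro J hJ
      rcases hIdeals _ (prod_isIdeal (M := M) J hJ) with h | h | h
      · left
        refine (Submodule.eq_bot_iff _).2 fun j hj => ?_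
        have hmem : ((j, (0 : M)) : g × M) ∈ J.prod (gModSpan F g M) :=
          Submodule.mem_prod.2 ⟨hj, Submodule.zero_mem _⟩
        rw [h] at hmem
        simpa using congrArg Prod.fst ((Submodule.mem_bot F).1 hmem)
      · left
        refine (Submodule.eq_bot_iff _).2 fun j hj => ?_
        have hmem : ((j, (0 : M)) : g × M) ∈ J.prod (gModSpan F g M) :=
          Submodule.mem_prod.2 ⟨hj, Submodule.zero_mem _⟩
        rw [h] at hmem
        simpa using (Submodule.mem_prod.1 (leibKer_le_prod hmem)).1
      · right
        refine Submodule.eq_top_iff'.2 fun x => ?_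
        have hmem : ((x, (0 : M)) : g × M) ∈ J.prod (gModSpan F g M) := by
          rw [h]; trivial
        exact (Submodule.mem_prod.1 hmem).1
    · -- M part
      by_cases hM0 : ∀ m : M, m = 0
      · exact Or.inl hM0
      · right
        push_neg at hM0
        obtain ⟨m₀, hm₀⟩ := hM0
        have hgMtop : gModSpan F g M = ⊤ := by
          rcases hgM with h | h
          · exact absurd (h m₀) hm₀
          · exact h
        have hnt : ∃ (x : g) (m : M), ⁅x, m⁆ ≠ 0 := by
          by_contra h
          push_neg at h
          have hbot : gModSpan F g M = ⊥ := by
            refine le_bot_iff.1 (Submodule.span_le.2 ?_)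
            rintro z ⟨x, n, rfl⟩
            simp [h x n]
          rw [hbot] at hgMtop
          exact hm₀ (by rw [← Submodule.mem_bot (R := F), hgMtop]; trivial)
        refine ⟨hnt, ⟨m₀, hm₀⟩, ?_⟩
        intro N hN
        rcases hIdeals _ (inr_isIdeal N hN) with h | h | h
        · left
          refine (Submodule.eq_bot_iff _).2 fun n hn => ?_
          have hmem : (((0 : g), n) : g × M) ∈ (⊥ : Submodule F g).prod N :=
            Submodule.mem_prod.2 ⟨Submodule.zero_mem _, hn⟩
          rw [h] at hmem
          simpa using congrArg Prod.snd ((Submodule.mem_bot F).1 hmem)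
        · right
          refine Submodule.eq_top_iff'.2 fun m => ?_
          have hmem : (((0 : g), m) : g × M) ∈ (⊥ : Submodule F g).prod N := by
            rw [h]
            exact inr_gModSpan_mem_leibKer (by rw [hgMtop]; trivial)
          exact (Submodule.mem_prod.1 hmem).2
        · right
          refine Submodule.eq_top_iff'.2 fun m => ?_
          have hmem : (((0 : g), m) : g × M) ∈ (⊥ : Submodule F g).prod N := by
            rw [h]; trivial
          exact (Submodule.mem_prod.1 hmem).2
  · rintro ⟨⟨⟨x₀, y₀, hxy⟩, hgIdeals⟩, hM⟩
    have hx₀ : x₀ ≠ 0 := fun h => hxy (by simp [h])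
    rcases hM with hM0 | ⟨hnt, hirr⟩
    · -- M = 0
      have hgM0 : gModSpan F g M = ⊥ := (Submodule.eq_bot_iff _).2 fun m _ => hM0 m
      have hleib : leibKer F (hemiMul (g := g) (M := M)) = ⊥ := by
        refine le_bot_iff.1 fun z hz => ?_
        obtain ⟨h1, h2⟩ := Submodule.mem_prod.1 (leibKer_le_prod hz)
        rw [hgM0] at h2
        exact (Submodule.mem_bot F).2 (Prod.ext (by simpa using h1) (by simpa using h2))
      constructor
      · intro I hI
        rcases hgIdeals _ (mapFst_isIdeal I hI) with h | h
        · left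
          refine (Submodule.eq_bot_iff _).2 fun p hp => ?_
          have h1 : p.1 ∈ I.map (LinearMap.fst F g M) := ⟨p, hp, rfl⟩
          rw [h] at h1
          exact Prod.ext (by simpa using h1) (hM0 p.2)
        · right; right
          refine Submodule.eq_top_iff'.2 fun z => ?_
          have h1 : z.1 ∈ I.map (LinearMap.fst F g M) := by rw [h]; trivial
          obtain ⟨p, hp, hp1⟩ := h1
          have : z = p := Prod.ext hp1.symm (by rw [hM0 z.2, hM0 p.2])
          rw [this]; exact hp
      · rw [hleib]
        have hmem : ((⁅x₀, y₀⁆, (0 : M)) : g × M) ∈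
            derivedSub F (hemiMul (g := g) (M := M)) :=
          Submodule.subset_span ⟨(x₀, 0), (y₀, 0), by simp [hemiMul]⟩
        refine lt_of_le_of_ne bot_le fun h => ?_
        rw [← h] at hmem
        exact hxy (by simpa using congrArg Prod.fst ((Submodule.mem_bot F).1 hmem))
    · -- M non-trivial irreducible
      have hgMtop : gModSpan F g M = ⊤ := by
        rcases hirr.2 (gModSpan F g M) (fun x n _ => lie_mem_gModSpan x n) with h | h
        · exfalso
          obtain ⟨x, m, hxm⟩ := hnt
          have := lie_mem_gModSpan (F := F) x m
          rw [h] at this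
          exact hxm ((Submodule.mem_bot F).1 this)
        · exact h
      have hleib : leibKer F (hemiMul (g := g) (M := M)) =
          (⊥ : Submodule F g).prod ⊤ := by
        rw [leibKer_eq_prod, hgMtop]
      constructor
      · intro I hI
        set N : Submodule F M := I.comap (LinearMap.inr F g M) with hNdef
        have hmemN : ∀ n : M, n ∈ N ↔ (((0 : g), n) : g × M) ∈ I := by
          intro n
          rw [hNdef, Submodule.mem_comap, LinearMap.inr_apply]
        have hNsub : IsLieSubmoduleOf F g M N := by
          intro x n hn
          have h1 : (((0 : g), n) : g × M) ∈ I := (hmemN n).1 hn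
          have h2 := (hI ((x : g), (0 : M)) _ h1).1
          refine (hmemN _).2 ?_
          have he : hemiMul ((x : g), (0 : M)) (((0 : g), n) : g × M)
              = (((0 : g), ⁅x, n⁆) : g × M) := by simp [hemiMul]
          rwa [he] at h2
        have key : ∀ p ∈ I, ∀ y : g, (((0 : g), ⁅y, p.2⁆) : g × M) ∈ I := by
          intro p hp y
          have h1 := (hI (y, (0 : M)) p hp).1
          have h2 := (hI (y, (0 : M)) p hp).2
          have h3 := I.add_mem h1 h2
          have he : hemiMul ((y : g), (0 : M)) p + hemiMul p ((y : g), (0 : M))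
              = (((0 : g), ⁅y, p.2⁆) : g × M) := by
            refine Prod.ext ?_ ?_
            · show ⁅y, p.1⁆ + ⁅p.1, y⁆ = 0
              rw [← lie_skew, neg_add_cancel]
            · show ⁅y, p.2⁆ + ⁅p.1, (0 : M)⁆ = ⁅y, p.2⁆
              rw [lie_zero, add_zero]
          rwa [he] at h3
        rcases hgIdeals _ (mapFst_isIdeal I hI) with hJ0 | hJtop
        · have hfst : ∀ p ∈ I, p.1 = (0 : g) := by
            intro p hp
            have h1 : p.1 ∈ I.map (LinearMap.fst F g M) := ⟨p, hp, rfl⟩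
            rw [hJ0] at h1
            simpa using h1
          rcases hirr.2 N hNsub with hN | hN
          · left
            refine (Submodule.eq_bot_iff _).2 fun p hp => ?_
            have h1 := hfst p hp
            have h2 : p.2 ∈ N := by
              refine (hmemN _).2 ?_
              have : p = (((0 : g), p.2) : g × M) := Prod.ext h1 rfl
              rwa [← this]
            rw [hN] at h2
            exact Prod.ext h1 (by simpa using h2)
          · right; left
            rw [hleib]
            refine le_antisymm (fun p hp => Submodule.mem_prod.2
              ⟨by simpa using hfst p hp, Submodule.mem_top⟩) (fun p hp => ?_)
            obtain ⟨h1, _⟩ := Submodule.mem_prod.1 hp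
            have hp1 : p.1 = 0 := by simpa using h1
            have h2 : p.2 ∈ N := by rw [hN]; trivial
            have h3 := (hmemN p.2).1 h2
            have : p = (((0 : g), p.2) : g × M) := Prod.ext hp1 rfl
            rwa [this]
        · rcases hirr.2 N hNsub with hN | hN
          · exfalso
            set P : Submodule F M := I.map (LinearMap.snd F g M) with hPdef
            have hPsub : IsLieSubmoduleOf F g M P := by
              rintro y m ⟨p, hp, rfl⟩
              exact ⟨(((0 : g), ⁅y, p.2⁆) : g × M), key p hp y, rfl⟩
            have hPzero : ∀ m ∈ P, ∀ y : g, ⁅y, m⁆ = 0 := by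
              rintro m ⟨p, hp, rfl⟩ y
              have h2 : ⁅y, (p.2 : M)⁆ ∈ N := (hmemN _).2 (key p hp y)
              rw [hN] at h2
              simpa using h2
            obtain ⟨xn, mn, hxm⟩ := hnt
            rcases hirr.2 P hPsub with hP | hP
            · have hxJ : xn ∈ I.map (LinearMap.fst F g M) := by rw [hJtop]; trivial
              obtain ⟨p, hp, hp1⟩ := hxJ
              have hmul := (hI (((0 : g), mn) : g × M) p hp).2
              have : (⁅p.1, mn⁆ : M) ∈ P :=
                ⟨hemiMul p (((0 : g), mn) : g × M), hmul, rfl⟩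
              rw [hP] at this
              exact hxm (by rw [← hp1]; simpa using this)
            · exact hxm (hPzero mn (by rw [hP]; trivial) xn)
          · right; right
            refine Submodule.eq_top_iff'.2 fun z => ?_
            have hz1 : z.1 ∈ I.map (LinearMap.fst F g M) := by rw [hJtop]; trivial
            obtain ⟨p, hp, hp1⟩ := hz1
            have hd : z.2 - p.2 ∈ N := by rw [hN]; trivial
            have h2 := (hmemN _).1 hd
            have he : z = p + (((0 : g), z.2 - p.2) : g × M) := by
              refine Prod.ext ?_ ?_
              · show z.1 = p.1 + 0
                rw [add_zero]; exact hp1.symm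
              · show z.2 = p.2 + (z.2 - p.2)
                rw [add_sub_cancel]
            rw [he]
            exact I.add_mem hp h2
      · -- leibKer < derivedSub : derivedSub = ⊤
        have hspanBr : IsIdealOf F (fun x y : g => ⁅x, y⁆)
            (Submodule.span F {z : g | ∃ x y : g, z = ⁅x, y⁆}) :=
          fun x a _ => ⟨Submodule.subset_span ⟨x, a, rfl⟩, Submodule.subset_span ⟨a, x, rfl⟩⟩
        have hJg : Submodule.span F {z : g | ∃ x y : g, z = ⁅x, y⁆} = ⊤ := by
          rcases hgIdeals _ hspanBr with h | h
          · exfalso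
            have := Submodule.subset_span (R := F) (s := {z : g | ∃ x y : g, z = ⁅x, y⁆})
              ⟨x₀, y₀, rfl⟩
            rw [h] at this
            exact hxy ((Submodule.mem_bot F).1 this)
          · exact h
        have hsub1 : ∀ x : g, ((x, (0 : M)) : g × M) ∈
            derivedSub F (hemiMul (g := g) (M := M)) := by
          intro x
          have hx : x ∈ Submodule.span F {z : g | ∃ x y : g, z = ⁅x, y⁆} := by
            rw [hJg]; trivial
          induction hx using Submodule.span_induction with
          | mem z hz =>
            obtain ⟨a, b, rfl⟩ := hz
            exact Submodule.subset_span ⟨(a, 0), (b, 0), by simp [hemiMul]⟩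
          | zero => exact Submodule.zero_mem (derivedSub F (hemiMul (g := g) (M := M)))
          | add a b _ _ ha hb => simpa using Submodule.add_mem _ ha hb
          | smul c a _ ha => simpa using Submodule.smul_mem _ c ha
        have hle : leibKer F (hemiMul (g := g) (M := M)) ≤
            derivedSub F (hemiMul (g := g) (M := M)) :=
          Submodule.span_mono (by rintro z ⟨a, rfl⟩; exact ⟨a, a, rfl⟩)
        have hsub2 : ∀ m : M, (((0 : g), m) : g × M) ∈
            derivedSub F (hemiMul (g := g) (M := M)) := fun m =>
          hle (inr_gModSpan_mem_leibKer (by rw [hgMtop]; trivial))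
        have hdtop : derivedSub F (hemiMul (g := g) (M := M)) = ⊤ := by
          refine Submodule.eq_top_iff'.2 fun z => ?_
          have := Submodule.add_mem _ (hsub1 z.1) (hsub2 z.2)
          simpa using this
        rw [hdtop, hleib]
        refine lt_of_le_of_ne le_top fun h => ?_
        have hmem : ((x₀, (0 : M)) : g × M) ∈ (⊥ : Submodule F g).prod ⊤ := by
          rw [h]; trivial
        exact hx₀ (by simpa using (Submodule.mem_prod.1 hmem).1)
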